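/- (Achievability of the LU-CBTB: sufficiency of the equality condition in Theorem 1.) Assume D is invertible and let λ = D⁻¹ t ∈ ℝ^{(P+1)(M−K)}, with m-th block λ_m ∈ ℝ^{M−K}. Let W^{1/2} denote the positive semidefinite square root of W. If the estimator g satisfies, μ-almost everywhere, W^{1/2}(g − θ_0) = W^{1/2} · Σ_{m=0}^{P} U_m λ_m (f_m / f_0), then its weighted mean-squared error attains the bound: ∫ (g − θ_0)ᵀ W (g − θ_0) f_0 dμ = tᵀ D⁻¹ t. -/

import Mathlib

open MeasureTheory Matrix
noncomputable def Matrix.PosSemidef.sqrt {n 𝕜 : Type*} [Fintype n] [DecidableEq n] [RCLike 𝕜] [PartialOrder 𝕜]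
    {A : Matrix n n 𝕜} (hA : A.PosSemidef) : Matrix n n 𝕜 :=
  hA.1.eigenvectorUnitary.1 * diagonal ((↑) ∘ (√·) ∘ hA.1.eigenvalues) *
  (star hA.1.eigenvectorUnitary : Matrix n n 𝕜)

private lemma Matrix.PosSemidef.sqrt_transpose' {M : ℕ} {W : Matrix (Fin M) (Fin M) ℝ}
    (hW : W.PosSemidef) : hW.sqrtᵀ = hW.sqrt := by
  rw [← conjTranspose_eq_transpose_of_trivial]
  simp only [Matrix.PosSemidef.sqrt, conjTranspose_mul, diagonal_conjTranspose]
  simp [Matrix.mul_assoc, Matrix.star_eq_conjTranspose]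

private lemma Matrix.PosSemidef.sqrt_mul_self' {M : ℕ} {W : Matrix (Fin M) (Fin M) ℝ}
    (hW : W.PosSemidef) : hW.sqrt * hW.sqrt = W := by
  have hU : (star hW.1.eigenvectorUnitary : Matrix (Fin M) (Fin M) ℝ) * hW.1.eigenvectorUnitary.1 = 1 :=
    Unitary.star_mul_self_of_mem hW.1.eigenvectorUnitary.2
  conv_rhs => rw [hW.1.spectral_theorem]
  simp only [Matrix.PosSemidef.sqrt]
  rw [show ∀ a b c d e f : Matrix (Fin M) (Fin M) ℝ, a * b * c * (d * e * f) = a * b * (c * d) * e * f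
    from fun a b c d e f => by simp only [Matrix.mul_assoc], hU, Matrix.mul_one, Matrix.mul_assoc _ (diagonal _) (diagonal _), diagonal_mul_diagonal]
  simp [Unitary.conjStarAlgAut_apply]
  congr 2
  ext i j
  simp [diagonal_apply, Real.mul_self_sqrt (hW.eigenvalues_nonneg i)]

private lemma sum_dotProduct' {n ι : Type*} [Fintype n] (s : Finset ι)
    (f : ι → n → ℝ) (v : n → ℝ) : (∑ i ∈ s, f i) ⬝ᵥ v = ∑ i ∈ s, f i ⬝ᵥ v := by
  simp only [dotProduct, Finset.sum_apply, Finset.sum_mul]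
  exact Finset.sum_comm

private lemma dotProduct_sum' {n ι : Type*} [Fintype n] (s : Finset ι)
    (v : n → ℝ) (f : ι → n → ℝ) : v ⬝ᵥ (∑ i ∈ s, f i) = ∑ i ∈ s, v ⬝ᵥ f i := by
  simp only [dotProduct, Finset.sum_apply, Finset.mul_sum]
  exact Finset.sum_comm

private lemma mulVec_sum' {m n ι : Type*} [Fintype n] (s : Finset ι)
    (A : Matrix m n ℝ) (f : ι → n → ℝ) :
    A.mulVec (∑ i ∈ s, f i) = ∑ i ∈ s, A.mulVec (f i) := by
  simp only [← Matrix.mulVecLin_apply, map_sum]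


/-- **Achievability of the LU-CBTB (sufficiency of the equality condition in Theorem 1).**
If `D` is invertible, `λ = D⁻¹ t` (with `m`-th block `λₘ`), and the estimator `g` satisfies
`W^{1/2}(g − θ₀) = W^{1/2} Σₘ Uₘ λₘ (fₘ/f₀)` μ-a.e. (where `W^{1/2}` is the positive
semidefinite square root of `W`), then the weighted MSE attains the bound `tᵀ D⁻¹ t`. -/
theorem lu_cbtb_equality_condition
    {Ω : Type*} [MeasurableSpace Ω] (μ : Measure Ω)
    (M K P : ℕ) (hK : 0 < K) (hKM : K < M) (hP : 1 ≤ P)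
    (f : Fin (P + 1) → Ω → ℝ)
    (hf_meas : ∀ m, Measurable (f m))
    (hf_nonneg : ∀ m x, 0 ≤ f m x)
    (hf_int : ∀ m, Integrable (f m) μ)
    (hf_one : ∀ m, ∫ x, f m x ∂μ = 1)
    (hf0_pos : ∀ᵐ x ∂μ, 0 < f 0 x)
    (B : Matrix (Fin (P + 1)) (Fin (P + 1)) ℝ)
    (hB : ∀ m n, B m n = ∫ x, f m x * f n x / f 0 x ∂μ)
    (hB_fin : ∀ m n, Integrable (fun x => f m x * f n x / f 0 x) μ)
    (θ : Fin (P + 1) → Fin M → ℝ)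
    (W : Matrix (Fin M) (Fin M) ℝ) (hW : W.PosSemidef)
    (U : Fin (P + 1) → Matrix (Fin M) (Fin (M - K)) ℝ)
    (D : Matrix (Fin (P + 1) × Fin (M - K)) (Fin (P + 1) × Fin (M - K)) ℝ)
    (hD : ∀ m n i j, D (m, i) (n, j) = ((U m)ᵀ * W * U n) i j * B m n)
    (t : Fin (P + 1) × Fin (M - K) → ℝ)
    (ht : ∀ m i, t (m, i) = (U m)ᵀ.mulVec (W.mulVec (fun k => θ m k - θ 0 k)) i)
    (hD_inv : IsUnit D.det)
    (g : Ω → Fin M → ℝ) (hg_meas : Measurable g)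
    (hg_eq : ∀ᵐ x ∂μ,
      hW.sqrt.mulVec (g x - θ 0) =
        hW.sqrt.mulVec (∑ m, (f m x / f 0 x) •
          (U m).mulVec (fun i => D⁻¹.mulVec t (m, i)))) :
    ∫ x, f 0 x * ((g x - θ 0) ⬝ᵥ W.mulVec (g x - θ 0)) ∂μ = t ⬝ᵥ D⁻¹.mulVec t := by
  classical
  set lam : Fin (P + 1) × Fin (M - K) → ℝ := D⁻¹.mulVec t with hlam
  set u : Fin (P + 1) → Fin M → ℝ := fun m => (U m).mulVec (fun i => lam (m, i)) with hu
  have hS : hW.sqrtᵀ = hW.sqrt := hW.sqrt_transpose'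
  -- quadratic form via sqrt
  have hquad : ∀ v : Fin M → ℝ,
      v ⬝ᵥ W.mulVec v = (hW.sqrt.mulVec v) ⬝ᵥ (hW.sqrt.mulVec v) := by
    intro v
    conv_lhs => rw [← hW.sqrt_mul_self', ← mulVec_mulVec, dotProduct_mulVec, ← hS,
      vecMul_transpose]
    rw [hS]
  -- pointwise a.e. identity for the integrand
  have hae : ∀ᵐ x ∂μ,
      f 0 x * ((g x - θ 0) ⬝ᵥ W.mulVec (g x - θ 0)) =
      ∑ m, ∑ n, (f m x * f n x / f 0 x) * (u m ⬝ᵥ W.mulVec (u n)) := by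
    filter_upwards [hg_eq, hf0_pos] with x hx hx0
    have h1 : (g x - θ 0) ⬝ᵥ W.mulVec (g x - θ 0) =
        (∑ m, (f m x / f 0 x) • u m) ⬝ᵥ W.mulVec (∑ m, (f m x / f 0 x) • u m) := by
      rw [hquad, hx, ← hquad]
    rw [h1, mulVec_sum', sum_dotProduct', Finset.mul_sum]
    refine Finset.sum_congr rfl fun m _ => ?_
    rw [smul_dotProduct, dotProduct_sum', smul_eq_mul, Finset.mul_sum, Finset.mul_sum]
    refine Finset.sum_congr rfl fun n _ => ?_
    rw [mulVec_smul, dotProduct_smul, smul_eq_mul]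
    field_simp
  rw [integral_congr_ae hae]
  -- integrability
  have hint : ∀ m n : Fin (P + 1),
      Integrable (fun x => (f m x * f n x / f 0 x) * (u m ⬝ᵥ W.mulVec (u n))) μ :=
    fun m n => (hB_fin m n).mul_const _
  rw [integral_finset_sum _ (fun m _ => integrable_finset_sum _ (fun n _ => hint m n))]
  have hIB : ∀ m : Fin (P + 1),
      (∫ x, ∑ n, (f m x * f n x / f 0 x) * (u m ⬝ᵥ W.mulVec (u n)) ∂μ) =
      ∑ n, B m n * (u m ⬝ᵥ W.mulVec (u n)) := by
    intro m
    rw [integral_finset_sum _ (fun n _ => hint m n)]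
    refine Finset.sum_congr rfl fun n _ => ?_
    rw [integral_mul_const, hB]
  simp only [hIB]
  -- algebra
  have hDlam : D.mulVec lam = t := by
    rw [hlam, mulVec_mulVec, Matrix.mul_nonsing_inv _ hD_inv, one_mulVec]
  have huWu : ∀ m n : Fin (P + 1),
      u m ⬝ᵥ W.mulVec (u n) =
      ∑ i, ∑ j, lam (m, i) * (((U m)ᵀ * W * U n) i j * lam (n, j)) := by
    intro m n
    have h2 : u m ⬝ᵥ W.mulVec (u n) =
        (fun i => lam (m, i)) ⬝ᵥ ((U m)ᵀ * W * U n).mulVec (fun j => lam (n, j)) := by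
      conv_rhs => rw [← mulVec_mulVec, ← mulVec_mulVec, dotProduct_mulVec, vecMul_transpose]
    rw [h2]
    simp only [dotProduct, mulVec, Finset.mul_sum]
  have key : ∑ m, ∑ n, B m n * (u m ⬝ᵥ W.mulVec (u n)) = lam ⬝ᵥ D.mulVec lam := by
    simp only [huWu]
    rw [dotProduct, Fintype.sum_prod_type]
    refine Finset.sum_congr rfl fun m _ => ?_
    simp only [mulVec, dotProduct, Fintype.sum_prod_type, hD, Finset.mul_sum]
    rw [Finset.sum_comm]
    refine Finset.sum_congr rfl fun n _ => Finset.sum_congr rfl fun i _ =>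
      Finset.sum_congr rfl fun j _ => by ring
  rw [key, hDlam, dotProduct_comm]
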